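/- Fix n ≥ 1 and s ∈ (0,1), and define K(x,y) := C_{n,s} · y^{2s}/(|x|² + y²)^{n/2 + s} on ℝⁿ × (0,∞). Then at every point (x,y) with y > 0 the function K satisfies ((1 − 2s)/(2y)) · ∂K/∂y + (1/2) Δ_{x,y} K = 0, where Δ_{x,y} denotes the Laplacian in all n + 1 variables (x₁, …, xₙ, y). -/

import Mathlib

set_option maxHeartbeats 1000000


open MeasureTheory Real

/-- The Poisson-type kernel `K_y(x) = C_{n,s} · y^{2s} / (|x|² + y²)^{n/2+s}`, where
`C_{n,s} = Γ(s + n/2) / (π^{n/2} Γ(s))`. -/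
noncomputable def fracPoissonKernel (n : ℕ) (s : ℝ) (y : ℝ) (x : EuclideanSpace ℝ (Fin n)) : ℝ :=
  (Real.Gamma (s + n / 2) / (Real.pi ^ ((n : ℝ) / 2) * Real.Gamma s))
    * y ^ (2 * s) / (‖x‖ ^ 2 + y ^ 2) ^ ((n : ℝ) / 2 + s)

private lemma hasDerivAt_base (u z : ℝ) :
    HasDerivAt (fun z' : ℝ => u + z' ^ 2) (2 * z) z := by
  simpa using (hasDerivAt_pow 2 z).const_add u

private lemma hasDerivAt_quad (a b t : ℝ) :
    HasDerivAt (fun t' : ℝ => a + b * t' + t' ^ 2) (b + 2 * t) t := by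
  have h := (((hasDerivAt_id t).const_mul b).const_add a).add (hasDerivAt_pow 2 t)
  simpa [Pi.add_def] using h

private lemma mono_y (u c p q z : ℝ) (hz : z ≠ 0) (hw : 0 < u + z ^ 2) :
    HasDerivAt (fun z' : ℝ => c * z' ^ p * (u + z' ^ 2) ^ q)
      (c * (p * z ^ (p - 1)) * (u + z ^ 2) ^ q
        + c * z ^ p * (2 * z * q * (u + z ^ 2) ^ (q - 1))) z :=
  ((Real.hasDerivAt_rpow_const (Or.inl hz)).const_mul c).mul
    ((hasDerivAt_base u z).rpow_const (Or.inl hw.ne'))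

private lemma mono2 (c a b q t : ℝ) (h : 0 < a + b * t + t ^ 2) :
    HasDerivAt (fun t' : ℝ => c * (a + b * t' + t' ^ 2) ^ q)
      (c * ((b + 2 * t) * q * (a + b * t + t ^ 2) ^ (q - 1))) t :=
  ((hasDerivAt_quad a b t).rpow_const (Or.inl h.ne')).const_mul c

private lemma mono3 (c a b q t : ℝ) (h : 0 < a + b * t + t ^ 2) :
    HasDerivAt (fun t' : ℝ => c * ((b + 2 * t') * q * (a + b * t' + t' ^ 2) ^ (q - 1)))
      (c * (2 * q * (a + b * t + t ^ 2) ^ (q - 1)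
        + (b + 2 * t) * q * ((b + 2 * t) * (q - 1) * (a + b * t + t ^ 2) ^ (q - 1 - 1)))) t := by
  have hl : HasDerivAt (fun t' : ℝ => b + 2 * t') (2 : ℝ) t := by
    simpa using ((hasDerivAt_id t).const_mul 2).const_add b
  have hf := hl.mul_const q
  have hg := (hasDerivAt_quad a b t).rpow_const (p := q - 1) (Or.inl h.ne')
  exact (hf.mul hg).const_mul c

/-- At every point `(x, y)` with `y > 0`, the Poisson-type kernel
`K(x,y) = C_{n,s} · y^{2s}/(|x|² + y²)^{n/2 + s}` satisfies
`((1 − 2s)/(2y)) · ∂K/∂y + (1/2) Δ_{x,y} K = 0`, where `Δ_{x,y}` is the Laplacian in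
all `n + 1` variables `(x₁, …, xₙ, y)`. -/
theorem poissonKernel_satisfies_pde
    (n : ℕ) (hn : 1 ≤ n) (s : ℝ) (hs : s ∈ Set.Ioo (0 : ℝ) 1)
    (x : EuclideanSpace ℝ (Fin n)) (y : ℝ) (hy : 0 < y) :
    ((1 - 2 * s) / (2 * y)) * deriv (fun y' : ℝ => fracPoissonKernel n s y' x) y
      + (1 / 2) *
        ((∑ i : Fin n,
            deriv (deriv (fun t : ℝ =>
              fracPoissonKernel n s y (x + t • EuclideanSpace.single i (1 : ℝ)))) 0)
          + deriv (deriv (fun y' : ℝ => fracPoissonKernel n s y' x)) y) = 0 := by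
  obtain ⟨hs0, _⟩ := hs
  have hy0 : y ≠ 0 := hy.ne'
  set C : ℝ := Real.Gamma (s + n / 2) / (Real.pi ^ ((n : ℝ) / 2) * Real.Gamma s) with hC
  set u : ℝ := ‖x‖ ^ 2 with hu_def
  set α : ℝ := (n : ℝ) / 2 + s with hα
  have hu : (0 : ℝ) ≤ u := by rw [hu_def]; positivity
  have hy2 : (0 : ℝ) < y ^ 2 := pow_pos hy 2
  have hw0 : (0 : ℝ) < u + y ^ 2 := by positivity
  -- pointwise formula for the kernel as a function of `y'`
  have hGeq : ∀ z : ℝ, 0 < z →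
      fracPoissonKernel n s z x = C * z ^ (2 * s) * (u + z ^ 2) ^ (-α) := by
    intro z hz
    have hbz : (0 : ℝ) < u + z ^ 2 := by positivity
    unfold fracPoissonKernel
    rw [← hC, ← hu_def, ← hα, Real.rpow_neg hbz.le, div_eq_mul_inv]
  -- the first derivative in `y'`
  set G1 : ℝ → ℝ := fun z =>
    C * (2 * s) * z ^ (2 * s - 1) * (u + z ^ 2) ^ (-α)
      + (-(2 * C * α)) * z ^ (2 * s + 1) * (u + z ^ 2) ^ (-α - 1) with hG1
  have hDP : ∀ z : ℝ, 0 < z →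
      deriv (fun y' : ℝ => fracPoissonKernel n s y' x) z = G1 z := by
    intro z hz
    have hbz : (0 : ℝ) < u + z ^ 2 := by positivity
    have hev : (fun y' : ℝ => fracPoissonKernel n s y' x) =ᶠ[nhds z]
        (fun y' : ℝ => C * y' ^ (2 * s) * (u + y' ^ 2) ^ (-α)) := by
      filter_upwards [Ioi_mem_nhds hz] with t ht using hGeq t ht
    rw [hev.deriv_eq, (mono_y u C (2 * s) (-α) z hz.ne' hbz).deriv]
    simp only [hG1]
    rw [Real.rpow_add_one hz.ne']
    ring
  -- second derivative in `y'`
  have hev2 : deriv (fun y' : ℝ => fracPoissonKernel n s y' x) =ᶠ[nhds y] G1 := by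
    filter_upwards [Ioi_mem_nhds hy] with t ht using hDP t ht
  have hG1' : HasDerivAt G1
      ((C * (2 * s) * ((2 * s - 1) * y ^ (2 * s - 1 - 1)) * (u + y ^ 2) ^ (-α)
          + C * (2 * s) * y ^ (2 * s - 1) * (2 * y * (-α) * (u + y ^ 2) ^ (-α - 1)))
        + ((-(2 * C * α)) * ((2 * s + 1) * y ^ (2 * s + 1 - 1)) * (u + y ^ 2) ^ (-α - 1)
          + (-(2 * C * α)) * y ^ (2 * s + 1)
              * (2 * y * (-α - 1) * (u + y ^ 2) ^ (-α - 1 - 1)))) y := by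
    rw [hG1]
    exact (mono_y u (C * (2 * s)) (2 * s - 1) (-α) y hy0 hw0).add
      (mono_y u (-(2 * C * α)) (2 * s + 1) (-α - 1) y hy0 hw0)
  -- the x-direction second derivatives
  have hnorm : ∀ (i : Fin n) (t : ℝ),
      ‖x + t • EuclideanSpace.single i (1 : ℝ)‖ ^ 2 = u + 2 * x i * t + t ^ 2 := by
    intro i t
    rw [hu_def, norm_add_sq_real, real_inner_smul_right]
    simp [EuclideanSpace.inner_single_right, norm_smul, Real.norm_eq_abs, sq_abs]
    ring
  have hb : ∀ (i : Fin n) (t : ℝ), (0 : ℝ) < (u + y ^ 2) + 2 * x i * t + t ^ 2 := by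
    intro i t
    have h1 : (u + y ^ 2) + 2 * x i * t + t ^ 2
        = ‖x + t • EuclideanSpace.single i (1 : ℝ)‖ ^ 2 + y ^ 2 := by
      rw [hnorm i t]; ring
    rw [h1]
    exact add_pos_of_nonneg_of_pos (sq_nonneg _) hy2
  have hfun : ∀ i : Fin n,
      (fun t : ℝ => fracPoissonKernel n s y (x + t • EuclideanSpace.single i (1 : ℝ)))
        = fun t : ℝ => (C * y ^ (2 * s)) * ((u + y ^ 2) + 2 * x i * t + t ^ 2) ^ (-α) := by
    intro i
    funext t
    unfold fracPoissonKernel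
    rw [← hC, ← hα, hnorm i t,
      show u + 2 * x i * t + t ^ 2 + y ^ 2 = (u + y ^ 2) + 2 * x i * t + t ^ 2 by ring,
      Real.rpow_neg (hb i t).le, div_eq_mul_inv, mul_assoc]
  have hd1 : ∀ i : Fin n,
      deriv (fun t : ℝ => fracPoissonKernel n s y (x + t • EuclideanSpace.single i (1 : ℝ)))
        = fun t : ℝ => (C * y ^ (2 * s))
            * ((2 * x i + 2 * t) * (-α) * ((u + y ^ 2) + 2 * x i * t + t ^ 2) ^ (-α - 1)) := by
    intro i
    funext t
    rw [hfun i]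
    exact (mono2 (C * y ^ (2 * s)) (u + y ^ 2) (2 * x i) (-α) t (hb i t)).deriv
  have hXi : ∀ i : Fin n,
      deriv (deriv (fun t : ℝ =>
        fracPoissonKernel n s y (x + t • EuclideanSpace.single i (1 : ℝ)))) 0
      = (C * y ^ (2 * s)) * (2 * (-α) * (u + y ^ 2) ^ (-α - 1)
          + (2 * x i) * (-α) * ((2 * x i) * (-α - 1) * (u + y ^ 2) ^ (-α - 1 - 1))) := by
    intro i
    rw [hd1 i, (mono3 (C * y ^ (2 * s)) (u + y ^ 2) (2 * x i) (-α) 0 (hb i 0)).deriv]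
    norm_num
  have hxsq : ∑ i : Fin n, x i ^ 2 = u := by
    rw [hu_def, EuclideanSpace.norm_eq, Real.sq_sqrt (by positivity)]
    simp [Real.norm_eq_abs, sq_abs]
  have hsum : ∑ i : Fin n,
      deriv (deriv (fun t : ℝ =>
        fracPoissonKernel n s y (x + t • EuclideanSpace.single i (1 : ℝ)))) 0
      = (C * y ^ (2 * s)) * (4 * (-α) * (-α - 1) * (u + y ^ 2) ^ (-α - 1 - 1)) * u
        + (n : ℝ) * ((C * y ^ (2 * s)) * (2 * (-α) * (u + y ^ 2) ^ (-α - 1))) := by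
    rw [Finset.sum_congr rfl fun i _ => hXi i]
    have hsplit : ∀ i : Fin n,
        (C * y ^ (2 * s)) * (2 * (-α) * (u + y ^ 2) ^ (-α - 1)
            + (2 * x i) * (-α) * ((2 * x i) * (-α - 1) * (u + y ^ 2) ^ (-α - 1 - 1)))
        = (C * y ^ (2 * s)) * (4 * (-α) * (-α - 1) * (u + y ^ 2) ^ (-α - 1 - 1)) * x i ^ 2
          + (C * y ^ (2 * s)) * (2 * (-α) * (u + y ^ 2) ^ (-α - 1)) := by
      intro i; ring
    rw [Finset.sum_congr rfl fun i _ => hsplit i, Finset.sum_add_distrib,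
      ← Finset.mul_sum, hxsq, Finset.sum_const, Finset.card_univ, Fintype.card_fin,
      nsmul_eq_mul]
  -- assemble
  rw [hev2.deriv_eq, hG1'.deriv, hDP y hy, hsum]
  simp only [hG1]
  simp only [Real.rpow_sub_one hy0, Real.rpow_add_one hy0, Real.rpow_sub_one hw0.ne']
  clear_value C u
  set A : ℝ := y ^ (2 * s) with hA
  set B : ℝ := (u + y ^ 2) ^ (-α) with hB
  clear_value A B
  rw [hα]
  field_simp
  ring
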